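/- Lemma 3.2(g), uniform mesh: for every α ∈ (0,1) and the uniform partition t_j = jτ with step size τ = T/N, for every 2 ≤ n ≤ N one has P^{n,n}_α / P^{n,n−1}_α = 1/(2 − 2^{1−α}), i.e. (2 − 2^{1−α}) · P^{n,n}_α = P^{n,n−1}_α. -/

import Mathlib

open Finset

/-- The kernel `k_β(s) = s^(β-1)/Γ(β)`. -/
noncomputable def kker (β s : ℝ) : ℝ := s ^ (β - 1) / Real.Gamma β

/-- The discrete L1 kernels `K^{n,j}_{1-α}`. -/
noncomputable def Kd (α : ℝ) (t : ℕ → ℝ) (n j : ℕ) : ℝ :=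
  (kker (2 - α) (t n - t (j - 1)) - kker (2 - α) (t n - t j)) / (t j - t (j - 1))

/-- The complementary discrete kernels `P^{n,i}_α`, defined by downward recursion. -/
noncomputable def Pd (α : ℝ) (t : ℕ → ℝ) (n i : ℕ) : ℝ :=
  if i = n then 1 / Kd α t n n
  else (1 / Kd α t i i) *
    ∑ j ∈ (Finset.Ioc i n).attach,
      Pd α t n j.1 * (Kd α t j.1 (i + 1) - Kd α t j.1 i)
termination_by n - i
decreasing_by
  have h := Finset.mem_Ioc.mp j.2
  omega

/-- Lemma 3.2(g), uniform mesh: for the uniform partition `t_j = jT/N` and `2 ≤ n ≤ N`,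
`(2 - 2^{1-α}) · P^{n,n}_α = P^{n,n-1}_α`, i.e. `P^{n,n}_α / P^{n,n-1}_α = 1/(2-2^{1-α})`. -/
theorem complementary_kernel_ratio_uniform
    (α T : ℝ) (N : ℕ) (t : ℕ → ℝ)
    (hα0 : 0 < α) (hα1 : α < 1) (hT : 0 < T) (hN : 2 ≤ N)
    (ht : ∀ j, t j = (j : ℝ) * (T / (N : ℝ))) :
    ∀ n, 2 ≤ n → n ≤ N →
      (2 - (2 : ℝ) ^ ((1 : ℝ) - α)) * Pd α t n n = Pd α t n (n - 1) := by
  intro n hn2 hnN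
  have hNpos : (0:ℝ) < (N:ℝ) := by positivity
  have hτ : (0:ℝ) < T / N := div_pos hT hNpos
  set τ := T / (N:ℝ) with hτdef
  have hΓ : 0 < Real.Gamma (2 - α) := Real.Gamma_pos_of_pos (by linarith)
  have e1 : (2 - α) - 1 = 1 - α := by ring
  have h1α : (1:ℝ) - α ≠ 0 := by linarith
  have htd : ∀ j, 1 ≤ j → t j - t (j - 1) = τ := by
    intro j hj
    rw [ht, ht]
    have hc : ((j - 1 : ℕ) : ℝ) = (j : ℝ) - 1 := by
      rw [Nat.cast_sub hj]; simp
    rw [hc]; ring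
  have ht2 : t n - t (n - 1 - 1) = 2 * τ := by
    rw [ht, ht]
    have hc : ((n - 1 - 1 : ℕ) : ℝ) = (n : ℝ) - 2 := by
      have h : n - 1 - 1 = n - 2 := by omega
      rw [h, Nat.cast_sub hn2]; simp
    rw [hc]; ring
  have hKnn : Kd α t n n = τ ^ ((1:ℝ) - α) / Real.Gamma (2 - α) / τ := by
    unfold Kd kker
    rw [htd n (by omega), sub_self, e1, Real.zero_rpow h1α]
    ring
  have hKmm : Kd α t (n - 1) (n - 1) = τ ^ ((1:ℝ) - α) / Real.Gamma (2 - α) / τ := by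
    unfold Kd kker
    rw [htd (n - 1) (by omega), sub_self, e1, Real.zero_rpow h1α]
    ring
  have hKnm : Kd α t n (n - 1)
      = ((2 * τ) ^ ((1:ℝ) - α) - τ ^ ((1:ℝ) - α)) / Real.Gamma (2 - α) / τ := by
    unfold Kd kker
    rw [ht2, htd n (by omega), htd (n - 1) (by omega), e1]
    ring
  have hIoc : Finset.Ioc (n - 1) n = {n} := by
    ext x; simp only [Finset.mem_Ioc, Finset.mem_singleton]; omega
  have hsucc : n - 1 + 1 = n := by omega
  have hPnn : Pd α t n n = 1 / Kd α t n n := by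
    rw [Pd]; simp
  rw [hPnn, Pd, if_neg (by omega : ¬ n - 1 = n), Finset.sum_attach _
      (fun j => Pd α t n j * (Kd α t j (n - 1 + 1) - Kd α t j (n - 1))),
    hIoc, Finset.sum_singleton, hsucc, hPnn, hKnn, hKmm, hKnm]
  have hb : (2 * τ) ^ ((1:ℝ) - α) = 2 ^ ((1:ℝ) - α) * τ ^ ((1:ℝ) - α) :=
    Real.mul_rpow (by norm_num) (le_of_lt hτ)
  rw [hb]
  have ha : (0:ℝ) < τ ^ ((1:ℝ) - α) := Real.rpow_pos_of_pos hτ _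
  field_simp
  ring
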